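/- If a quiver J is φ_n-injective (n ≥ 3) and contains a closed walk of minimal length ℓ ≥ 2 with distinct vertices v_0, …, v_{ℓ−1}, then for any indices j, k with j − k not congruent to 1 mod ℓ, there is no edge of J from the out-neighborhood class B_k = τ(σ^{−1}(v_{k−1})) to B_j = τ(σ^{−1}(v_{j−1})); i.e., edges from B_k terminate in B_j only when j − k ≡ 1 (mod ℓ). -/

import Mathlib

/-- A quiver: vertex set, edge set, source and target maps. -/
structure Quiv where
  V : Type
  E : Type
  s : E → V
  t : E → V

/-- A quiver homomorphism. -/
@[ext]
structure QuivHom (G H : Quiv) where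
  onV : G.V → H.V
  onE : G.E → H.E
  comm_s : ∀ e, H.s (onE e) = onV (G.s e)
  comm_t : ∀ e, H.t (onE e) = onV (G.t e)

/-- Identity quiver homomorphism. -/
def QuivHom.id (G : Quiv) : QuivHom G G :=
  ⟨_root_.id, _root_.id, fun _ => rfl, fun _ => rfl⟩

/-- Composition of quiver homomorphisms. -/
def QuivHom.comp {G H K : Quiv} (g : QuivHom H K) (f : QuivHom G H) : QuivHom G K :=
  ⟨g.onV ∘ f.onV, g.onE ∘ f.onE,
    fun e => by simp [Function.comp, g.comm_s, f.comm_s],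
    fun e => by simp [Function.comp, g.comm_t, f.comm_t]⟩

/-- The directed path `P_n` with vertices `a_0, …, a_{n-1}` and edges `a_i → a_{i+1}`. -/
def Quiv.path (n : ℕ) : Quiv :=
  ⟨Fin n, Fin (n - 1), fun i => ⟨i.val, by have := i.isLt; omega⟩,
    fun i => ⟨i.val + 1, by have := i.isLt; omega⟩⟩

/-- The directed cycle `C_n`. -/
def Quiv.cyc (n : ℕ) : Quiv :=
  ⟨Fin n, Fin n, _root_.id, fun i => ⟨(i.val + 1) % n, Nat.mod_lt _ i.pos⟩⟩

/-- The natural embedding `φ_n : P_n → C_n`. -/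
def pathEmb (n : ℕ) : QuivHom (Quiv.path n) (Quiv.cyc n) where
  onV := _root_.id
  onE := fun i => ⟨i.val, by have := i.isLt; omega⟩
  comm_s := fun e => rfl
  comm_t := fun e => by
    have he := e.isLt
    apply Fin.ext
    show (e.val + 1) % n = e.val + 1
    exact Nat.mod_eq_of_lt (by omega)

/-- `J` is `φ_n`-injective: every quiver map `P_n → J` factors through `φ_n`. -/
def PhiInj (n : ℕ) (J : Quiv) : Prop :=
  ∀ ψ : QuivHom (Quiv.path n) J, ∃ ψ' : QuivHom (Quiv.cyc n) J,
    ψ'.comp (pathEmb n) = ψ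

/-- `v, e` form a walk of length `k` in `J` (only indices `< k` matter). -/
def HasWalk (J : Quiv) (k : ℕ) (v : ℕ → J.V) (e : ℕ → J.E) : Prop :=
  ∀ i < k, J.s (e i) = v i ∧ J.t (e i) = v (i + 1)

/-- There is an edge from `a` to `b` in `J`. -/
def Quiv.Edge (J : Quiv) (a b : J.V) : Prop := ∃ f, J.s f = a ∧ J.t f = b

/-- A loaded quiver: an edge between every (ordered) pair of vertices. -/
def Quiv.Loaded (J : Quiv) : Prop := ∀ a b, J.Edge a b

/-- `H`, with partitions `A` of its vertices and `B` of its edges indexed by the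
vertices and edges of `G`, is a blow-up of `G`. -/
def IsBlowup (G H : Quiv) (A : G.V → Set H.V) (B : G.E → Set H.E) : Prop :=
  (∀ w, ∃! v, w ∈ A v) ∧ (∀ f, ∃! e, f ∈ B e) ∧
  (∀ e f, f ∈ B e → H.s f ∈ A (G.s e) ∧ H.t f ∈ A (G.t e)) ∧
  (∀ e x y, x ∈ A (G.s e) → y ∈ A (G.t e) → ∃ f ∈ B e, H.s f = x ∧ H.t f = y)

/-- Monomorphisms of quivers: injective vertex and edge maps. -/
def QuivHom.Mono {G H : Quiv} (f : QuivHom G H) : Prop :=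
  Function.Injective f.onV ∧ Function.Injective f.onE

/-- A class of quiver morphisms. -/
def MorClass := ∀ D C : Quiv, Set (QuivHom D C)

/-- `J` is injective with respect to a class of morphisms `Φ`. -/
def ClassInjective (Φ : MorClass) (J : Quiv) : Prop :=
  ∀ D C (φ : QuivHom D C), φ ∈ Φ D C → ∀ ψ : QuivHom D J,
    ∃ ψ' : QuivHom C J, ψ'.comp φ = ψ

/-- Undirected adjacency. -/
def Quiv.Adj (J : Quiv) (a b : J.V) : Prop := J.Edge a b ∨ J.Edge b a

/-- Weak connectivity. -/
def Quiv.WeaklyConnected (J : Quiv) : Prop :=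
  ∀ a b : J.V, Relation.ReflTransGen J.Adj a b

/-- `J` has a closed walk of length `m`. -/
def ClosedWalk (J : Quiv) (m : ℕ) : Prop :=
  ∃ v e, HasWalk J m v e ∧ v m = v 0

/-- Cyclic successor on `Fin ℓ`. -/
def finNext {ℓ : ℕ} (i : Fin ℓ) : Fin ℓ := ⟨(i.val + 1) % ℓ, Nat.mod_lt _ i.pos⟩

/-- Disjoint union (coproduct) of a family of quivers. -/
def Quiv.sigma {Λ : Type} (Jf : Λ → Quiv) : Quiv :=
  ⟨Σ l, (Jf l).V, Σ l, (Jf l).E,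
    fun f => ⟨f.1, (Jf f.1).s f.2⟩, fun f => ⟨f.1, (Jf f.1).t f.2⟩⟩

/-- Helper: if a walk of length `n-1` exists, φ_n-injectivity gives a closing edge. -/
lemma closing_edge (n : ℕ) (hn : 3 ≤ n) (J : Quiv) (hJ : PhiInj n J)
    (w : ℕ → J.V) (f : ℕ → J.E) (hw : HasWalk J (n - 1) w f) :
    ∃ g, J.s g = w (n - 1) ∧ J.t g = w 0 := by
  let ψ : QuivHom (Quiv.path n) J :=
    ⟨fun i => w i.val, fun i => f i.val,
     fun i => (hw i.val i.isLt).1,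
     fun i => (hw i.val i.isLt).2⟩
  obtain ⟨ψ', hψ'⟩ := hJ ψ
  have hV : ∀ i : Fin n, ψ'.onV i = w i.val := by
    intro i
    have := congrFun (congrArg QuivHom.onV hψ') i
    exact this
  refine ⟨ψ'.onE ⟨n - 1, by omega⟩, ?_, ?_⟩
  · refine (ψ'.comm_s _).trans ?_
    exact hV ⟨n - 1, by omega⟩
  · refine (ψ'.comm_t _).trans ?_
    have : ((Quiv.cyc n).t ⟨n - 1, by omega⟩) = (⟨0, by omega⟩ : Fin n) := by
      apply Fin.ext
      show (n - 1 + 1) % n = 0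
      have : n - 1 + 1 = n := by omega
      rw [this, Nat.mod_self]
    rw [this]
    exact hV ⟨0, by omega⟩

lemma mod_small_aux {ℓ t : ℕ} (hℓ : 0 < ℓ) (h : t < 2 * ℓ) :
    (t < ℓ ∧ t % ℓ = t) ∨ (ℓ ≤ t ∧ t % ℓ = t - ℓ) := by
  rcases Nat.lt_or_ge t ℓ with h' | h'
  · exact Or.inl ⟨h', Nat.mod_eq_of_lt h'⟩
  · refine Or.inr ⟨h', ?_⟩
    rw [Nat.mod_eq_sub_mod h']
    exact Nat.mod_eq_of_lt (by omega)

/-- for a minimal closed walk `v_0 → ⋯ → v_{ℓ-1} → v_0` in a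
`φ_n`-injective quiver, with `B_j = τ(σ⁻¹(v_{j-1}))`, edges from `B_k` can only
terminate in `B_j` when `j ≡ k + 1 (mod ℓ)`. -/
theorem edges_between_classes (n : ℕ) (hn : 3 ≤ n) (J : Quiv) (hJ : PhiInj n J)
    (ℓ : ℕ) (hℓ : 2 ≤ ℓ) (v : ℕ → J.V) (e : ℕ → J.E)
    (hwalk : HasWalk J ℓ v e) (hclosed : v ℓ = v 0)
    (hdist : ∀ i < ℓ, ∀ j < ℓ, v i = v j → i = j)
    (hmin : IsLeast {m | 1 ≤ m ∧ ClosedWalk J m} ℓ)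
    (j k : ℕ) (hj : j < ℓ) (hk : k < ℓ) (hne : ¬ (j ≡ k + 1 [MOD ℓ]))
    (x y : J.V)
    (hx : ∃ f, J.s f = v ((k + ℓ - 1) % ℓ) ∧ J.t f = x)
    (hy : ∃ f, J.s f = v ((j + ℓ - 1) % ℓ) ∧ J.t f = y) :
    ¬ J.Edge x y := by
  rintro ⟨fxy, hfxy_s, hfxy_t⟩
  obtain ⟨fx, hfx_s, hfx_t⟩ := hx
  obtain ⟨fy, hfy_s, hfy_t⟩ := hy
  have hℓ0 : 0 < ℓ := by omega
  set a := (k + ℓ - 1) % ℓ with ha_def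
  set b := (j + ℓ - 1) % ℓ with hb_def
  have ha_lt : a < ℓ := Nat.mod_lt _ hℓ0
  have hb_lt : b < ℓ := Nat.mod_lt _ hℓ0
  set V : ℕ → J.V := fun i => v (i % ℓ) with hV_def
  set E : ℕ → J.E := fun i => e (i % ℓ) with hE_def
  have hVE : ∀ i, J.s (E i) = V i ∧ J.t (E i) = V (i + 1) := by
    intro i
    obtain ⟨hs, ht⟩ := hwalk (i % ℓ) (Nat.mod_lt _ hℓ0)
    refine ⟨hs, ?_⟩
    rw [ht]
    show v (i % ℓ + 1) = v ((i + 1) % ℓ)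
    have hmm : (i % ℓ + 1) % ℓ = (i + 1) % ℓ := Nat.mod_add_mod i ℓ 1
    have hilt : i % ℓ < ℓ := Nat.mod_lt _ hℓ0
    rcases Nat.lt_or_ge (i % ℓ + 1) ℓ with h | h
    · have : (i + 1) % ℓ = i % ℓ + 1 := by rw [← hmm]; exact Nat.mod_eq_of_lt h
      rw [this]
    · have h1 : i % ℓ + 1 = ℓ := by omega
      have h2 : (i + 1) % ℓ = 0 := by
        rw [← hmm, h1, Nat.mod_self]
      rw [h1, h2, hclosed]
  have hnl : n ≤ n * ℓ := Nat.le_mul_of_pos_right n hℓ0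
  set n3 := n - 3 with hn3
  set S := a + n * ℓ - n3 with hS
  have hSn3 : S + n3 = a + n * ℓ := by omega
  have hVa : V (S + n3) = v a := by
    show v ((S + n3) % ℓ) = v a
    rw [hSn3, Nat.add_mul_mod_self_right, Nat.mod_eq_of_lt ha_lt]
  -- walk 1 : V S → ⋯ → V (S+n3) = v a → x → y
  set w1 : ℕ → J.V := fun i => if i ≤ n3 then V (S + i) else if i = n3 + 1 then x else y
    with hw1
  set f1 : ℕ → J.E := fun i => if i < n3 then E (S + i) else if i = n3 then fx else fxy
    with hf1
  have hwalk1 : HasWalk J (n - 1) w1 f1 := by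
    intro i hi
    rcases Nat.lt_or_ge i n3 with h | h
    · have e1 : f1 i = E (S + i) := by simp [hf1, h]
      have e2 : w1 i = V (S + i) := by simp [hw1, Nat.le_of_lt h]
      have e3 : w1 (i + 1) = V (S + i + 1) := by
        have : i + 1 ≤ n3 := h
        simp [hw1, this, Nat.add_assoc]
      rw [e1, e2, e3]
      exact hVE (S + i)
    · rcases Nat.eq_or_lt_of_le h with h' | h'
      · -- i = n3
        have e1 : f1 i = fx := by simp [hf1, ← h']
        have e2 : w1 i = V (S + n3) := by simp [hw1, ← h']
        have e3 : w1 (i + 1) = x := by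
          have h4 : ¬ (i + 1 ≤ n3) := by omega
          have h5 : i + 1 = n3 + 1 := by omega
          simp [hw1, h4, h5]
        rw [e1, e2, e3, hVa]
        exact ⟨hfx_s, hfx_t⟩
      · -- i = n3 + 1
        have h'' : i = n3 + 1 := by omega
        have e1 : f1 i = fxy := by
          have : ¬ i < n3 := by omega
          have : i ≠ n3 := by omega
          simp [hf1, *]
        have e2 : w1 i = x := by
          have h4 : ¬ (i ≤ n3) := by omega
          simp [hw1, h4, h'']
        have e3 : w1 (i + 1) = y := by
          have h4 : ¬ (i + 1 ≤ n3) := by omega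
          have h5 : i + 1 ≠ n3 + 1 := by omega
          simp [hw1, h4, h5, h'.ne']
        rw [e1, e2, e3]
        exact ⟨hfxy_s, hfxy_t⟩
  obtain ⟨g1, hg1_s, hg1_t⟩ := closing_edge n hn J hJ w1 f1 hwalk1
  have hw1_last : w1 (n - 1) = y := by
    have h4 : ¬ (n - 1 ≤ n3) := by omega
    have h5 : n - 1 ≠ n3 + 1 := by omega
    simp [hw1, h4, h5]
  have hw1_0 : w1 0 = V S := by simp [hw1]
  rw [hw1_last] at hg1_s
  rw [hw1_0] at hg1_t
  set p := S % ℓ with hp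
  have hp_lt : p < ℓ := Nat.mod_lt _ hℓ0
  have hVS : V S = v p := rfl
  have hpn3 : (p + n3) % ℓ = a := by
    have : (p + n3) % ℓ = (S + n3) % ℓ := Nat.mod_add_mod S ℓ n3
    rw [this, hSn3, Nat.add_mul_mod_self_right, Nat.mod_eq_of_lt ha_lt]
  -- walk 2 : v b → y → V p → ⋯ → V (p + n3) = v a
  set w2 : ℕ → J.V := fun i => if i = 0 then v b else if i = 1 then y else V (p + i - 2)
    with hw2
  set f2 : ℕ → J.E := fun i => if i = 0 then fy else if i = 1 then g1 else E (p + i - 2)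
    with hf2
  have hwalk2 : HasWalk J (n - 1) w2 f2 := by
    intro i hi
    match i with
    | 0 =>
      have e2 : w2 0 = v b := by simp [hw2]
      have e3 : w2 1 = y := by simp [hw2]
      have e1 : f2 0 = fy := by simp [hf2]
      rw [e1, e2, e3]
      exact ⟨hfy_s, hfy_t⟩
    | 1 =>
      have e1 : f2 1 = g1 := by simp [hf2]
      have e2 : w2 1 = y := by simp [hw2]
      have e3 : w2 2 = V p := by
        show (if (2:ℕ) = 0 then v b else if (2:ℕ) = 1 then y else V (p + 2 - 2)) = V p
        norm_num
      rw [e1, e2, e3]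
      refine ⟨hg1_s, ?_⟩
      rw [hg1_t]
      show v (S % ℓ) = v (p % ℓ)
      rw [Nat.mod_eq_of_lt hp_lt]
    | (m + 2) =>
      have e1 : f2 (m + 2) = E (p + m) := by
        have : p + (m + 2) - 2 = p + m := by omega
        simp [hf2, this]
      have e2 : w2 (m + 2) = V (p + m) := by
        have : p + (m + 2) - 2 = p + m := by omega
        simp [hw2, this]
      have e3 : w2 (m + 3) = V (p + m + 1) := by
        have h1 : p + (m + 3) - 2 = p + m + 1 := by omega
        show (if m + 3 = 0 then v b else if m + 3 = 1 then y else V (p + (m + 3) - 2))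
            = V (p + m + 1)
        simp [h1]
      rw [e1, e2]
      have := hVE (p + m)
      exact ⟨this.1, by rw [show m + 2 + 1 = m + 3 from rfl, e3]; exact this.2⟩
  obtain ⟨g2, hg2_s, hg2_t⟩ := closing_edge n hn J hJ w2 f2 hwalk2
  have hw2_last : w2 (n - 1) = v a := by
    have h1 : n - 1 ≠ 0 := by omega
    have h2 : n - 1 ≠ 1 := by omega
    have h3 : p + (n - 1) - 2 = p + n3 := by omega
    have : w2 (n - 1) = V (p + n3) := by simp [hw2, h1, h2, h3]
    rw [this]
    show v ((p + n3) % ℓ) = v a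
    rw [hpn3]
  have hw2_0 : w2 0 = v b := by simp [hw2]
  rw [hw2_last] at hg2_s
  rw [hw2_0] at hg2_t
  -- walk 3 : closed walk v b → ⋯ → v a → v b of length d + 1
  set d := (a + ℓ - b) % ℓ with hd
  have hd_lt : d < ℓ := Nat.mod_lt _ hℓ0
  have hbd : (b + d) % ℓ = a := by
    have h1 : (b + d) % ℓ = (b + (a + ℓ - b)) % ℓ := Nat.add_mod_mod b (a + ℓ - b) ℓ
    have h2 : b + (a + ℓ - b) = a + ℓ := by omega
    rw [h1, h2, Nat.add_mod_right, Nat.mod_eq_of_lt ha_lt]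
  set w3 : ℕ → J.V := fun i => if i ≤ d then V (b + i) else v b with hw3
  set f3 : ℕ → J.E := fun i => if i < d then E (b + i) else g2 with hf3
  have hwalk3 : HasWalk J (d + 1) w3 f3 := by
    intro i hi
    rcases Nat.lt_or_ge i d with h | h
    · have e1 : f3 i = E (b + i) := by simp [hf3, h]
      have e2 : w3 i = V (b + i) := by simp [hw3, Nat.le_of_lt h]
      have e3 : w3 (i + 1) = V (b + i + 1) := by
        have : i + 1 ≤ d := h
        simp [hw3, this, Nat.add_assoc]
      rw [e1, e2, e3]
      exact hVE (b + i)
    · have h' : i = d := by omega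
      have e1 : f3 i = g2 := by simp [hf3, h']
      have e2 : w3 i = v a := by
        have : w3 i = V (b + d) := by simp [hw3, h']
        rw [this]
        show v ((b + d) % ℓ) = v a
        rw [hbd]
      have e3 : w3 (i + 1) = v b := by
        have h4 : ¬ (i + 1 ≤ d) := by omega
        simp [hw3, h4]
      rw [e1, e2, e3]
      exact ⟨hg2_s, hg2_t⟩
  have hcw : ClosedWalk J (d + 1) := by
    refine ⟨w3, f3, hwalk3, ?_⟩
    have h4 : ¬ (d + 1 ≤ d) := by omega
    have h0 : w3 0 = v b := by
      have : w3 0 = V (b + 0) := by simp [hw3]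
      rw [this]
      show v ((b + 0) % ℓ) = v b
      rw [Nat.add_zero, Nat.mod_eq_of_lt hb_lt]
    have h1 : w3 (d + 1) = v b := by simp [hw3, h4]
    rw [h0, h1]
  have hle : ℓ ≤ d + 1 := hmin.2 ⟨by omega, hcw⟩
  have hdeq : d = ℓ - 1 := by omega
  -- final modular arithmetic contradiction
  apply hne
  show j % ℓ = (k + 1) % ℓ
  have h1 := mod_small_aux hℓ0 (show k + ℓ - 1 < 2 * ℓ by omega)
  have h2 := mod_small_aux hℓ0 (show j + ℓ - 1 < 2 * ℓ by omega)
  have h3 := mod_small_aux hℓ0 (show a + ℓ - b < 2 * ℓ by omega)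
  have h4 := mod_small_aux hℓ0 (show k + 1 < 2 * ℓ by omega)
  have h5 : j % ℓ = j := Nat.mod_eq_of_lt hj
  rw [← ha_def] at h1
  rw [← hb_def] at h2
  rw [← hd] at h3
  rcases h1 with ⟨_, h1⟩ | ⟨_, h1⟩ <;> rcases h2 with ⟨_, h2⟩ | ⟨_, h2⟩ <;>
    rcases h3 with ⟨_, h3⟩ | ⟨_, h3⟩ <;> rcases h4 with ⟨_, h4⟩ | ⟨_, h4⟩ <;> omega
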